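/- In ℂ(x)[∂], the operator L = ∂³ − (6/x²)∂ + 12/x³ + h commutes with A2 = ∂⁵ − (10/x²)∂³ + (40/x³)∂² − (80/x⁴)∂ + 80/x⁵ for every complex constant h. -/

import Mathlib

open RatFunc

/-- The derivation `d/dx` on the differential field `ℂ(x)` of rational functions,
given by the quotient rule on the (coprime) numerator and denominator. -/
noncomputable def ratD (f : RatFunc ℂ) : RatFunc ℂ :=
  (algebraMap (Polynomial ℂ) (RatFunc ℂ) (Polynomial.derivative f.num)
      * algebraMap (Polynomial ℂ) (RatFunc ℂ) f.denom
    - algebraMap (Polynomial ℂ) (RatFunc ℂ) f.num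
      * algebraMap (Polynomial ℂ) (RatFunc ℂ) (Polynomial.derivative f.denom))
    / algebraMap (Polynomial ℂ) (RatFunc ℂ) f.denom ^ 2

set_option maxHeartbeats 4000000

local notation "A" => algebraMap (Polynomial ℂ) (RatFunc ℂ)

open Polynomial in
lemma ratD_eq (p q : Polynomial ℂ) (hq : q ≠ 0) :
    ratD (A p / A q) = (A (derivative p) * A q - A p * A (derivative q)) / A q ^ 2 := by
  set f : RatFunc ℂ := A p / A q with hf
  have hD : A f.denom ≠ 0 := RatFunc.algebraMap_ne_zero (denom_ne_zero f)
  have hQ : A q ≠ 0 := RatFunc.algebraMap_ne_zero hq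
  have key : f.num * q = p * f.denom := by
    apply RatFunc.algebraMap_injective ℂ
    rw [map_mul, map_mul]
    have h1 : A f.num / A f.denom = A p / A q := by rw [RatFunc.num_div_denom]
    rw [div_eq_div_iff hD hQ] at h1
    linear_combination h1
  have key' : derivative f.num * q + f.num * derivative q
      = derivative p * f.denom + p * derivative f.denom := by
    have := congrArg derivative key
    simpa [derivative_mul] using this
  rw [ratD]
  rw [div_eq_div_iff (pow_ne_zero 2 hD) (pow_ne_zero 2 hQ)]
  have k1 := congrArg A key
  have k2 := congrArg A key'
  simp only [map_mul, map_add] at k1 k2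
  linear_combination (A f.denom * A q) * k2 - (A (derivative f.denom) * A q + A (derivative q) * A f.denom) * k1

lemma d_algebraMap (p : Polynomial ℂ) : ratD (A p) = A (Polynomial.derivative p) := by
  have := ratD_eq p 1 one_ne_zero
  simpa using this

open Polynomial in
lemma aux_add (p q r s : Polynomial ℂ) (hq : q ≠ 0) (hs : s ≠ 0) :
    ratD (A p / A q + A r / A s) = ratD (A p / A q) + ratD (A r / A s) := by
  have hQ : A q ≠ 0 := RatFunc.algebraMap_ne_zero hq
  have hS : A s ≠ 0 := RatFunc.algebraMap_ne_zero hs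
  rw [div_add_div _ _ hQ hS, ← map_mul, ← map_mul, ← map_mul, ← map_add,
    ratD_eq _ _ (mul_ne_zero hq hs), ratD_eq _ _ hq, ratD_eq _ _ hs]
  simp only [derivative_add, derivative_mul, map_add, map_mul]
  field_simp
  ring

open Polynomial in
lemma aux_mul (p q r s : Polynomial ℂ) (hq : q ≠ 0) (hs : s ≠ 0) :
    ratD (A p / A q * (A r / A s))
      = ratD (A p / A q) * (A r / A s) + A p / A q * ratD (A r / A s) := by
  have hQ : A q ≠ 0 := RatFunc.algebraMap_ne_zero hq
  have hS : A s ≠ 0 := RatFunc.algebraMap_ne_zero hs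
  rw [div_mul_div_comm, ← map_mul, ← map_mul,
    ratD_eq _ _ (mul_ne_zero hq hs), ratD_eq _ _ hq, ratD_eq _ _ hs]
  simp only [derivative_mul, map_add, map_mul]
  field_simp
  ring

@[simp] lemma d_add (a b : RatFunc ℂ) : ratD (a + b) = ratD a + ratD b := by
  rw [← RatFunc.num_div_denom a, ← RatFunc.num_div_denom b]
  exact aux_add _ _ _ _ (denom_ne_zero a) (denom_ne_zero b)

@[simp] lemma d_mul (a b : RatFunc ℂ) : ratD (a * b) = ratD a * b + a * ratD b := by
  rw [← RatFunc.num_div_denom a, ← RatFunc.num_div_denom b]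
  exact aux_mul _ _ _ _ (denom_ne_zero a) (denom_ne_zero b)

@[simp] lemma d_zero : ratD (0 : RatFunc ℂ) = 0 := by
  simpa using d_algebraMap 0

@[simp] lemma d_one : ratD (1 : RatFunc ℂ) = 0 := by
  simpa using d_algebraMap 1

@[simp] lemma d_neg (a : RatFunc ℂ) : ratD (-a) = -ratD a := by
  have := d_add a (-a)
  simp at this
  linear_combination -this

@[simp] lemma d_sub (a b : RatFunc ℂ) : ratD (a - b) = ratD a - ratD b := by
  rw [sub_eq_add_neg, d_add, d_neg, sub_eq_add_neg]

@[simp] lemma d_C (c : ℂ) : ratD (RatFunc.C c) = 0 := by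
  rw [← RatFunc.algebraMap_C, d_algebraMap, Polynomial.derivative_C, map_zero]

@[simp] lemma d_natCast (n : ℕ) : ratD ((n : RatFunc ℂ)) = 0 := by
  rw [← map_natCast (algebraMap (Polynomial ℂ) (RatFunc ℂ)) n, d_algebraMap]
  simp

@[simp] lemma d_ofNat (n : ℕ) [n.AtLeastTwo] :
    ratD (no_index (OfNat.ofNat n) : RatFunc ℂ) = 0 := by
  rw [← Nat.cast_ofNat, d_natCast]

@[simp] lemma d_inv_Xpow (n : ℕ) :
    ratD (((X : RatFunc ℂ) ^ n)⁻¹) = -(n : RatFunc ℂ) * ((X : RatFunc ℂ) ^ (n + 1))⁻¹ := by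
  rcases n with _ | m
  · simp
  · have hX : (Polynomial.X : Polynomial ℂ) ^ (m + 1) ≠ 0 :=
      pow_ne_zero _ Polynomial.X_ne_zero
    have e : ((X : RatFunc ℂ) ^ (m + 1))⁻¹ = A 1 / A (Polynomial.X ^ (m + 1)) := by
      rw [map_one, one_div, map_pow, RatFunc.algebraMap_X]
    rw [e, ratD_eq _ _ hX, Polynomial.derivative_one, Polynomial.derivative_X_pow]
    have hXr : (X : RatFunc ℂ) ≠ 0 := RatFunc.X_ne_zero
    simp only [map_zero, zero_mul, map_one, one_mul, map_mul, map_pow,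
      RatFunc.algebraMap_X, RatFunc.algebraMap_C, Nat.add_sub_cancel, map_natCast]
    field_simp
    ring


/-- The operator `L = ∂³ - (6/x²)∂ + 12/x³ + h`, acting on `ℂ(x)`. -/
noncomputable def opL (h : ℂ) (f : RatFunc ℂ) : RatFunc ℂ :=
  ratD^[3] f - 6 / X ^ 2 * ratD f + (12 / X ^ 3 + RatFunc.C h) * f

/-- The operator `A₂ = ∂⁵ - (10/x²)∂³ + (40/x³)∂² - (80/x⁴)∂ + 80/x⁵`. -/
noncomputable def opA2 (f : RatFunc ℂ) : RatFunc ℂ :=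
  ratD^[5] f - 10 / X ^ 2 * ratD^[3] f + 40 / X ^ 3 * ratD^[2] f
    - 80 / X ^ 4 * ratD f + 80 / X ^ 5 * f

/-- `L` and `A₂` commute in `ℂ(x)[∂]`. -/
theorem stmt5 (h : ℂ) : ∀ f : RatFunc ℂ, opL h (opA2 f) = opA2 (opL h f) := by
  intro f
  have e2 : ∀ g : RatFunc ℂ, ratD^[2] g = ratD (ratD g) := fun g => rfl
  have e3 : ∀ g : RatFunc ℂ, ratD^[3] g = ratD (ratD (ratD g)) := fun g => rfl
  have e5 : ∀ g : RatFunc ℂ, ratD^[5] g = ratD (ratD (ratD (ratD (ratD g)))) := fun g => rfl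
  simp only [opL, opA2, e2, e3, e5, div_eq_mul_inv]
  simp only [d_add, d_sub, d_mul, d_neg, d_one, d_zero, d_C, d_ofNat, d_natCast,
    d_inv_Xpow, Nat.cast_ofNat]
  simp only [← inv_pow]
  ring
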